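/- Let R be a subring of a commutative ring T with a common ideal C containing a T-regular element, with T flat over R and C principal as an ideal of T. Then for every ideal I of R, Tor_1^R(R/C, I) = 0. -/

import Mathlib

open CategoryTheory

set_option maxHeartbeats 2000000
set_option synthInstance.maxHeartbeats 1000000

open CategoryTheory

open LinearMap TensorProduct in
private lemma comm_aux {R₀ : Type*} [CommRing R₀] {T P Q : Type*}
    [AddCommGroup T] [Module R₀ T] [AddCommGroup P] [Module R₀ P]
    [AddCommGroup Q] [Module R₀ Q]
    (m : T →ₗ[R₀] T) (f : P →ₗ[R₀] Q) (x : T ⊗[R₀] P) :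
    rTensor Q m (lTensor T f x) = lTensor T f (rTensor P m x) := by
  rw [← LinearMap.comp_apply, ← LinearMap.comp_apply, lTensor_comp_rTensor, rTensor_comp_lTensor]

open LinearMap TensorProduct in
/-- Core module-theoretic computation. -/
theorem core_lemma {T : Type*} [CommRing T] (R : Subring T) (C : Ideal T)
    (hCR : (C : Set T) ⊆ (R : Set T))
    (hreg : ∃ c ∈ C, c ∈ nonZeroDivisors T)
    (hflat : Module.Flat ↥R T) (hprin : C.IsPrincipal)
    (I : Ideal ↥R) (J : Ideal ↥R) (hJ1 : ∀ r : ↥R, r ∈ J ↔ (r : T) ∈ C)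
    {M0 M1 M2 : Type*} [AddCommGroup M0] [Module ↥R M0] [Module.Flat ↥R M0]
    [AddCommGroup M1] [Module ↥R M1] [AddCommGroup M2] [Module ↥R M2]
    (ε : M0 →ₗ[↥R] I) (d1 : M1 →ₗ[↥R] M0) (d2 : M2 →ₗ[↥R] M1)
    (hεsurj : Function.Surjective ε)
    (hex0 : range d1 = ker ε) (hex1 : range d2 = ker d1)
    (z : (↥R ⧸ J) ⊗[↥R] M1)
    (hz : lTensor (↥R ⧸ J) d1 z = 0) :
    ∃ w, lTensor (↥R ⧸ J) d2 w = z := by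
  -- the generator t
  obtain ⟨t, ht⟩ := hprin.principal
  have htmem : t ∈ C := ht ▸ Submodule.mem_span_singleton_self t
  have hdiv : ∀ x ∈ C, ∃ s, t * s = x := by
    intro x hx
    rw [ht] at hx
    obtain ⟨s, hs⟩ := Submodule.mem_span_singleton.mp hx
    exact ⟨s, by rw [mul_comm]; rw [← smul_eq_mul]; exact hs⟩
  obtain ⟨c, hcC, hcreg⟩ := hreg
  have htreg : t ∈ nonZeroDivisors T := by
    obtain ⟨s, hs⟩ := hdiv c hcC
    rw [mem_nonZeroDivisors_iff_right]
    intro x hx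
    have hxc : x * c = 0 := by
      rw [← hs]
      calc x * (t * s) = (x * t) * s := by ring
      _ = 0 := by rw [hx, zero_mul]
    exact mem_nonZeroDivisors_iff_right.mp hcreg x hxc
  have hcancel : ∀ a b : T, t * a = t * b → a = b := by
    intro a b h
    rw [mul_comm t a, mul_comm t b] at h
    exact (mul_cancel_right_mem_nonZeroDivisors htreg).mp h
  -- smul of ↥R on T is multiplication by the value
  have hsmul : ∀ (r : ↥R) (x : T), r • x = (r : T) * x := fun r x => rfl
  -- the division map σ
  have hJC : ∀ j : J, ((j : ↥R) : T) ∈ C := fun j => (hJ1 _).mp j.2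
  obtain ⟨σ, hσ⟩ : ∃ σ : J →ₗ[↥R] T, ∀ j : J, t * σ j = ((j : ↥R) : T) := by
    refine ⟨⟨⟨fun j => (hdiv _ (hJC j)).choose, ?_⟩, ?_⟩, fun j => (hdiv _ (hJC j)).choose_spec⟩
    · intro j k
      apply hcancel
      rw [mul_add, (hdiv _ (hJC (j+k))).choose_spec, (hdiv _ (hJC j)).choose_spec,
        (hdiv _ (hJC k)).choose_spec]
      rfl
    · intro r j
      apply hcancel
      rw [(hdiv _ (hJC (r • j))).choose_spec]
      show ((((r • j) : J) : ↥R) : T) = t * (r • _)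
      rw [hsmul, ← mul_assoc, mul_comm t (r : T), mul_assoc, (hdiv _ (hJC j)).choose_spec]
      rfl
  -- lift z to y : M1
  have hmk1 : ∀ (r : ↥R), r • (1 : ↥R ⧸ J) = Ideal.Quotient.mk J r := by
    intro r
    have h1 : (1 : ↥R ⧸ J) = Submodule.Quotient.mk (1 : ↥R) := rfl
    rw [h1, ← Submodule.Quotient.mk_smul, smul_eq_mul, mul_one, Ideal.Quotient.mk_eq_mk]
  have hμsurj : ∀ zz : (↥R ⧸ J) ⊗[↥R] M1, ∃ y : M1, ((1 : ↥R ⧸ J) ⊗ₜ[↥R] y) = zz := by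
    intro zz
    induction zz using TensorProduct.induction_on with
    | zero => exact ⟨0, by simp⟩
    | tmul a m =>
      obtain ⟨r, rfl⟩ := Ideal.Quotient.mk_surjective a
      exact ⟨r • m, by rw [tmul_smul, smul_tmul', hmk1]⟩
    | add x y hx hy =>
      obtain ⟨y1, hy1⟩ := hx
      obtain ⟨y2, hy2⟩ := hy
      exact ⟨y1 + y2, by rw [tmul_add, hy1, hy2]⟩
  obtain ⟨y, hy⟩ := hμsurj z
  have hv0 : (1 : ↥R ⧸ J) ⊗ₜ[↥R] (d1 y) = 0 := by
    rw [← hz, ← hy, lTensor_tmul]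
  have hεv : ε (d1 y) = 0 := by
    have h : d1 y ∈ range d1 := ⟨y, rfl⟩
    rw [hex0] at h
    exact h
  -- obtain u : J ⊗ M0 mapping to 1 ⊗ d1 y
  obtain ⟨u, hu⟩ : ∃ u : ↥J ⊗[↥R] M0, rTensor M0 J.subtype u = (1 : ↥R) ⊗ₜ[↥R] (d1 y) := by
    have h1 : rTensor M0 J.mkQ ((1 : ↥R) ⊗ₜ[↥R] (d1 y)) = 0 := by
      rw [rTensor_tmul]
      have h2 : J.mkQ (1 : ↥R) = (1 : ↥R ⧸ J) := by
        rw [Submodule.mkQ_apply, Ideal.Quotient.mk_eq_mk, map_one]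
      rw [h2, hv0]
    have hexact := rTensor_exact (f := J.subtype) (g := J.mkQ) M0
      (LinearMap.exact_subtype_mkQ J) (Submodule.mkQ_surjective J)
    exact (hexact _).mp h1
  -- move to T ⊗ M0
  obtain ⟨mulT, hmulT⟩ : ∃ m : T →ₗ[↥R] T, m = LinearMap.mulLeft ↥R t := ⟨_, rfl⟩
  obtain ⟨θ, hθ⟩ : ∃ f : (↥R ⊗[↥R] M0) →ₗ[↥R] (T ⊗[↥R] M0),
      f = rTensor M0 (Algebra.linearMap ↥R T) := ⟨_, rfl⟩
  have halginj : Function.Injective (algebraMap ↥R T) := fun a b h => Subtype.ext h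
  have hθinj : Function.Injective θ := by
    rw [hθ]
    exact Module.Flat.rTensor_preserves_injective_linearMap _ halginj
  obtain ⟨τ, hτ⟩ : ∃ f : ↥J →ₗ[↥R] T, f = (Algebra.linearMap ↥R T).comp J.subtype := ⟨_, rfl⟩
  have hmulσ : mulT.comp σ = τ := by
    apply LinearMap.ext
    intro j
    simp only [LinearMap.comp_apply, hmulT, LinearMap.mulLeft_apply, hτ, hσ]
    rfl
  obtain ⟨w, hwdef⟩ : ∃ w : T ⊗[↥R] M0, w = rTensor M0 σ u := ⟨_, rfl⟩
  have claim1 : rTensor M0 mulT w = rTensor M0 τ u := by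
    rw [hwdef, ← LinearMap.comp_apply, ← rTensor_comp, hmulσ]
  have hτu : rTensor M0 τ u = θ ((1 : ↥R) ⊗ₜ[↥R] (d1 y)) := by
    rw [← hu, ← LinearMap.comp_apply, hθ, ← rTensor_comp, hτ]
  have claim2 : rTensor ↥I mulT (lTensor T ε w) = 0 := by
    rw [comm_aux, claim1, hτu, hθ, rTensor_tmul]
    have h1 : (Algebra.linearMap ↥R T) (1 : ↥R) = (1 : T) := by simp
    rw [h1, lTensor_tmul, hεv, tmul_zero]
  -- lTensor T ε w = 0
  have hu1zero : lTensor T ε w = 0 := by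
    have hinj : Function.Injective (lTensor T I.subtype) :=
      Module.Flat.lTensor_preserves_injective_linearMap _ (Submodule.injective_subtype I)
    apply hinj
    rw [map_zero]
    have h3 : rTensor ↥R mulT (lTensor T I.subtype (lTensor T ε w)) = 0 := by
      rw [comm_aux, claim2, map_zero]
    have h4 : ∀ x : T ⊗[↥R] ↥R, TensorProduct.rid ↥R T (rTensor ↥R mulT x)
        = t * TensorProduct.rid ↥R T x := by
      intro x
      induction x using TensorProduct.induction_on with
      | zero => simp
      | tmul s r =>
        rw [rTensor_tmul, TensorProduct.rid_tmul, TensorProduct.rid_tmul, hmulT,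
          LinearMap.mulLeft_apply, hsmul, hsmul]
        ring
      | add a b ha hb => rw [map_add, map_add, map_add, ha, hb, mul_add]
    have h5 : t * TensorProduct.rid ↥R T (lTensor T I.subtype (lTensor T ε w)) = 0 := by
      rw [← h4, h3, map_zero]
    have h6 : TensorProduct.rid ↥R T (lTensor T I.subtype (lTensor T ε w)) = 0 :=
      hcancel _ 0 (by rw [h5, mul_zero])
    exact (TensorProduct.rid ↥R T).injective (by rw [h6, map_zero])
  -- w comes from T ⊗ (ker ε)
  obtain ⟨w', hw'⟩ : ∃ w' : T ⊗[↥R] ↥(ker ε), lTensor T (ker ε).subtype w' = w := by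
    have hexK := lTensor_exact (f := (ker ε).subtype) (g := ε) T
      (LinearMap.exact_subtype_ker_map ε) hεsurj
    exact (hexK w).mp hu1zero
  -- mulT of w' lands in the image of J ⊗ (ker ε)
  obtain ⟨u3, hu3⟩ : ∃ u3 : ↥J ⊗[↥R] ↥(ker ε),
      rTensor ↥(ker ε) τ u3 = rTensor ↥(ker ε) mulT w' := by
    have h : ∀ x : T ⊗[↥R] ↥(ker ε), rTensor ↥(ker ε) mulT x ∈ range (rTensor ↥(ker ε) τ) := by
      intro x
      induction x using TensorProduct.induction_on with
      | zero => rw [map_zero]; exact zero_mem _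
      | tmul s k =>
        rw [rTensor_tmul, hmulT, LinearMap.mulLeft_apply]
        have htsC : t * s ∈ C := Ideal.mul_mem_right s C htmem
        have htsR : t * s ∈ (R : Set T) := hCR htsC
        have hmemJ : (⟨t * s, htsR⟩ : ↥R) ∈ J := (hJ1 _).mpr htsC
        refine ⟨(⟨⟨t * s, htsR⟩, hmemJ⟩ : ↥J) ⊗ₜ[↥R] k, ?_⟩
        rw [rTensor_tmul, hτ]
        rfl
      | add a b ha hb =>
        rw [map_add]
        exact add_mem ha hb
    exact h w'
  -- conclude 1 ⊗ (d1 y) is in the image of J ⊗ (ker ε)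
  have hstep : (1 : ↥R) ⊗ₜ[↥R] (d1 y)
      = rTensor M0 J.subtype (lTensor ↥J (ker ε).subtype u3) := by
    apply hθinj
    rw [← hτu, ← claim1, ← hw', comm_aux, ← hu3]
    have h : θ (rTensor M0 J.subtype (lTensor ↥J (ker ε).subtype u3))
        = lTensor T (ker ε).subtype (rTensor ↥(ker ε) τ u3) := by
      rw [hθ, ← LinearMap.comp_apply, ← rTensor_comp, ← LinearMap.comp_apply,
        ← LinearMap.comp_apply, lTensor_comp_rTensor]
      have h2 : (Algebra.linearMap ↥R T ∘ₗ J.subtype).rTensor M0 ∘ₗ ((ker ε).subtype.lTensor ↥J)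
          = TensorProduct.map τ (ker ε).subtype := by
        rw [hτ, rTensor_comp_lTensor]
      rw [h2]
    rw [h]
  -- final induction
  have hfin : ∀ uu : ↥J ⊗[↥R] ↥(ker ε), ∃ y' : M1,
      d1 y' = TensorProduct.lid ↥R M0 (rTensor M0 J.subtype (lTensor ↥J (ker ε).subtype uu)) ∧
      ((1 : ↥R ⧸ J) ⊗ₜ[↥R] y' : (↥R ⧸ J) ⊗[↥R] M1) = 0 := by
    intro uu
    induction uu using TensorProduct.induction_on with
    | zero => exact ⟨0, by simp⟩
    | tmul c k =>
      have hkK : (k : M0) ∈ range d1 := by rw [hex0]; exact k.2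
      obtain ⟨m, hm⟩ := hkK
      refine ⟨(c : ↥R) • m, ?_, ?_⟩
      · rw [map_smul, hm, lTensor_tmul, rTensor_tmul, TensorProduct.lid_tmul]
        rfl
      · rw [tmul_smul, smul_tmul', hmk1]
        have h : Ideal.Quotient.mk J (c : ↥R) = 0 := (Ideal.Quotient.eq_zero_iff_mem).mpr c.2
        rw [h, zero_tmul]
    | add a b ha hb =>
      obtain ⟨y1, hy1, hy1'⟩ := ha
      obtain ⟨y2, hy2, hy2'⟩ := hb
      exact ⟨y1 + y2, by rw [map_add, hy1, hy2, map_add, map_add, map_add],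
        by rw [tmul_add, hy1', hy2', add_zero]⟩
  obtain ⟨y', hy'1, hy'2⟩ := hfin u3
  have hd1y' : d1 y' = d1 y := by
    rw [hy'1, ← hstep, TensorProduct.lid_tmul, one_smul]
  have hker : y - y' ∈ ker d1 := by
    rw [LinearMap.mem_ker, map_sub, hd1y', sub_self]
  rw [← hex1] at hker
  obtain ⟨x, hx⟩ := hker
  refine ⟨(1 : ↥R ⧸ J) ⊗ₜ[↥R] x, ?_⟩
  rw [lTensor_tmul, hx, ← hy]
  have h : y = y' + (y - y') := by abel
  conv_rhs => rw [h]
  rw [tmul_add, hy'2, zero_add]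

/-- condition (FP). For every ideal `I` of `R`,
`Tor_1^R(R/C, I) = 0`. -/
theorem stmt_5 (T : Type*) [CommRing T] (R : Subring T) (C : Ideal T)
    (hCR : (C : Set T) ⊆ (R : Set T))
    (hreg : ∃ c ∈ C, c ∈ nonZeroDivisors T)
    (hflat : Module.Flat ↥R T) (hprin : C.IsPrincipal)
    (I : Ideal ↥R) :
    Subsingleton
      (((Tor (ModuleCat ↥R) 1).obj
          (ModuleCat.of ↥R (↥R ⧸ Ideal.comap (algebraMap ↥R T) C))).obj
        (ModuleCat.of ↥R I)) := by
  obtain ⟨P⟩ := HasProjectiveResolution.out (Z := ModuleCat.of ↥R ↥I)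
  -- the tensoring functor
  have hexact : (((((MonoidalCategory.tensoringLeft (ModuleCat ↥R)).obj
      (ModuleCat.of ↥R (↥R ⧸ Ideal.comap (algebraMap ↥R T) C))).mapHomologicalComplex
        (ComplexShape.down ℕ)).obj P.complex)).ExactAt 1 := by
    rw [HomologicalComplex.exactAt_iff' _ 2 1 0 (by simp) (by simp)]
    rw [ShortComplex.moduleCat_exact_iff]
    intro x hx
    -- identify with module-theoretic data
    have hflat0 : Module.Flat ↥R ↑(P.complex.X 0) := by
      have hproj : Module.Projective ↥R ↑(P.complex.X 0) := by
        rw [IsProjective.iff_projective]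
        have : Projective (P.complex.X 0) := inferInstance
        convert this
      infer_instance
    -- ε, d1, d2
    have hεsurj : Function.Surjective ((P.π.f 0).hom : ↑(P.complex.X 0) →ₗ[↥R] ↥I) := by
      have h := (ModuleCat.epi_iff_surjective (P.π.f 0)).mp (inferInstanceAs (Epi (P.π.f 0)))
      exact h
    have hex0 : LinearMap.range ((P.complex.d 1 0).hom : ↑(P.complex.X 1) →ₗ[↥R] ↑(P.complex.X 0))
        = LinearMap.ker ((P.π.f 0).hom : ↑(P.complex.X 0) →ₗ[↥R] ↥I) := by
      exact (ShortComplex.moduleCat_exact_iff_range_eq_ker _).mp P.exact₀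
    have hex1 : LinearMap.range ((P.complex.d 2 1).hom : ↑(P.complex.X 2) →ₗ[↥R] ↑(P.complex.X 1))
        = LinearMap.ker ((P.complex.d 1 0).hom : ↑(P.complex.X 1) →ₗ[↥R] ↑(P.complex.X 0)) := by
      exact (ShortComplex.moduleCat_exact_iff_range_eq_ker _).mp (P.exact_succ 0)
    have key := core_lemma R C hCR hreg hflat hprin I
      (Ideal.comap (algebraMap ↥R T) C) (fun r => Ideal.mem_comap)
      (M0 := ↑(P.complex.X 0)) (M1 := ↑(P.complex.X 1)) (M2 := ↑(P.complex.X 2))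
      ((P.π.f 0).hom : ↑(P.complex.X 0) →ₗ[↥R] ↥I)
      (P.complex.d 1 0).hom (P.complex.d 2 1).hom hεsurj hex0 hex1 x (by exact hx)
    obtain ⟨w, hw⟩ := key
    exact ⟨w, hw⟩
  have hzero : Limits.IsZero (((((MonoidalCategory.tensoringLeft (ModuleCat ↥R)).obj
      (ModuleCat.of ↥R (↥R ⧸ Ideal.comap (algebraMap ↥R T) C))).mapHomologicalComplex
        (ComplexShape.down ℕ)).obj P.complex).homology 1) :=
    (HomologicalComplex.exactAt_iff_isZero_homology _ 1).mp hexact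
  have hzero2 : Limits.IsZero (((Tor (ModuleCat ↥R) 1).obj
      (ModuleCat.of ↥R (↥R ⧸ Ideal.comap (algebraMap ↥R T) C))).obj (ModuleCat.of ↥R ↥I)) :=
    Limits.IsZero.of_iso hzero (P.isoLeftDerivedObj ((MonoidalCategory.tensoringLeft
      (ModuleCat ↥R)).obj (ModuleCat.of ↥R (↥R ⧸ Ideal.comap (algebraMap ↥R T) C))) 1)
  have h10 : (𝟙 (((Tor (ModuleCat ↥R) 1).obj
      (ModuleCat.of ↥R (↥R ⧸ Ideal.comap (algebraMap ↥R T) C))).obj (ModuleCat.of ↥R ↥I)))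
      = 0 := hzero2.eq_of_src _ _
  refine ⟨fun a b => ?_⟩
  have ha : a = 0 := by
    conv_lhs => rw [← ModuleCat.id_apply _ a, h10]
    rfl
  have hb : b = 0 := by
    conv_lhs => rw [← ModuleCat.id_apply _ b, h10]
    rfl
  rw [ha, hb]
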